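/- Let u be a word over an ordered alphabet A with bwt_A(u) = b_1 b_2 ⋯ b_m (where m = |u| and each b_i ∈ A), and let p ≥ 1. A word w over A is a conjugate of u^p if and only if bwt_A(w) = b_1^p b_2^p ⋯ b_m^p. -/

import Mathlib

/-- `wordPow u p` is the `p`-fold concatenation `u^p`. -/
def wordPow {A : Type*} (u : List A) : ℕ → List A
  | 0 => []
  | n + 1 => u ++ wordPow u n

/-- A word is primitive if it is not a proper integer power of another word. -/
def Primitive {A : Type*} (w : List A) : Prop :=
  ∀ (v : List A) (m : ℕ), w = wordPow v m → m = 1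

/-- The Burrows–Wheeler transform of a word: the last letters of its cyclic rotations
listed in non-decreasing lexicographic order. -/
def bwt {A : Type*} [LinearOrder A] (w : List A) : List A :=
  (Multiset.sort
    (((List.range w.length).map (fun i => w.rotate i) : List (List A)) : Multiset (List A)) (· ≤ ·)).filterMap
    List.getLast?

/-- `w` is `π`-clustering: its BWT is `π(a₁)^{k₁} ⋯ π(a_k)^{k_k}` where `a₁ < … < a_k`
enumerates the alphabet and `k_i` is the number of occurrences of `π(a_i)` in `w`. -/
def Clustering {A : Type*} [LinearOrder A] [Fintype A] (π : Equiv.Perm A) (w : List A) : Prop :=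
  bwt w =
    ((Finset.univ.sort (· ≤ ·)).map (fun a => List.replicate (w.count (π a)) (π a))).flatten

section Aux
variable {A : Type*}

lemma wordPow_length (u : List A) (p : ℕ) : (wordPow u p).length = p * u.length := by
  induction p with
  | zero => simp [wordPow]
  | succ n ih => simp [wordPow, ih]; ring

lemma wordPow_comm (u : List A) (p : ℕ) : u ++ wordPow u p = wordPow u p ++ u := by
  induction p with
  | zero => simp [wordPow]
  | succ n ih =>
    show u ++ (u ++ wordPow u n) = (u ++ wordPow u n) ++ u
    rw [List.append_assoc, ih]

lemma wordPow_succ' (u : List A) (p : ℕ) : wordPow u (p + 1) = wordPow u p ++ u := by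
  show u ++ wordPow u p = wordPow u p ++ u
  exact wordPow_comm u p

lemma wordPow_swap (s t : List A) (p : ℕ) :
    wordPow (t ++ s) p ++ t = t ++ wordPow (s ++ t) p := by
  induction p with
  | zero => simp [wordPow]
  | succ n ih =>
    show ((t ++ s) ++ wordPow (t ++ s) n) ++ t = t ++ ((s ++ t) ++ wordPow (s ++ t) n)
    rw [List.append_assoc, ih]
    simp [List.append_assoc]

variable [LinearOrder A]

lemma lex_append_of_lex {x y : List A} (hl : x.length = y.length)
    (h : List.Lex (· < ·) x y) (s t : List A) : List.Lex (· < ·) (x ++ s) (y ++ t) := by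
  induction x generalizing y with
  | nil =>
    cases y with
    | nil => cases h
    | cons b y => simp at hl
  | cons a x ih =>
    cases y with
    | nil => cases h
    | cons b y =>
      cases h with
      | cons h' => exact List.Lex.cons (ih (by simpa using hl) h')
      | rel hab => exact List.Lex.rel hab

lemma take_lex {x y : List A} (hl : x.length = y.length)
    (h : List.Lex (· < ·) x y) (k : ℕ) :
    x.take k = y.take k ∨ List.Lex (· < ·) (x.take k) (y.take k) := by
  induction x generalizing y k with
  | nil =>
    cases y with
    | nil => cases h
    | cons b y => simp at hl
  | cons a x ih =>
    cases y with
    | nil => cases h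
    | cons b y =>
      cases k with
      | zero => left; simp
      | succ k =>
        cases h with
        | cons h' =>
          rcases ih (by simpa using hl) h' k with h1 | h1
          · left; simp [h1]
          · right; exact List.Lex.cons h1
        | rel hab => right; exact List.Lex.rel hab

lemma take_le_take {x y : List A} (hl : x.length = y.length)
    (h : x ≤ y) (k : ℕ) : x.take k ≤ y.take k := by
  rcases lt_or_eq_of_le h with h | rfl
  · rcases take_lex hl h k with h1 | h1
    · exact le_of_eq h1
    · exact le_of_lt h1
  · exact le_rfl

lemma wordPow_le_wordPow {x y : List A} (hl : x.length = y.length)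
    (h : x ≤ y) (p : ℕ) : wordPow x p ≤ wordPow y p := by
  rcases lt_or_eq_of_le h with h | rfl
  · cases p with
    | zero => exact le_rfl
    | succ p =>
      exact le_of_lt (show List.Lex (· < ·) (x ++ wordPow x p) (y ++ wordPow y p) from
        lex_append_of_lex hl h _ _)
  · exact le_rfl

lemma List.eq_of_perm_of_sorted {l₁ l₂ : List A} (h : l₁.Perm l₂)
    (s₁ : l₁.Pairwise (· ≤ ·)) (s₂ : l₂.Pairwise (· ≤ ·)) : l₁ = l₂ :=
  List.Perm.eq_of_pairwise' s₁ s₂ h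

end Aux

section Rots
variable {A : Type*}

def rots (w : List A) : List (List A) := (List.range w.length).map (fun i => w.rotate i)

lemma length_of_mem_rots {w x : List A} (h : x ∈ rots w) : x.length = w.length := by
  simp only [rots, List.mem_map, List.mem_range] at h
  obtain ⟨i, _, rfl⟩ := h
  exact List.length_rotate w i

lemma length_rots (w : List A) : (rots w).length = w.length := by
  simp [rots]

lemma self_mem_rots {w : List A} (hw : w ≠ []) : w ∈ rots w := by
  simp only [rots, List.mem_map, List.mem_range]
  exact ⟨0, List.length_pos_iff.mpr hw, List.rotate_zero w⟩

lemma rots_rotate_one (w : List A) : ((rots w).map (fun x => x.rotate 1)).Perm (rots w) := by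
  cases hn : w.length with
  | zero => simp [rots, hn]
  | succ n =>
    have e0 : (rots w).map (fun x => x.rotate 1)
        = (List.range (n + 1)).map (fun i => w.rotate (i + 1)) := by
      simp only [rots, hn, List.map_map]
      exact List.map_congr_left fun i _ => by simp [List.rotate_rotate]
    have e1 : (List.range (n + 1)).map (fun i => w.rotate (i + 1))
        = ((List.range n).map (fun i => w.rotate (i + 1))) ++ [w] := by
      rw [List.range_succ, List.map_append, List.map_singleton, ← hn, List.rotate_length]
    have e2 : rots w = w :: (List.range n).map (fun i => w.rotate (i + 1)) := by
      rw [rots, hn, List.range_succ_eq_map]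
      simp [List.map_map, Nat.succ_eq_add_one, Function.comp, Nat.add_comm]
    rw [e0, e1, e2]
    exact List.perm_append_singleton _ _

lemma rots_rotate_perm (w : List A) (j : ℕ) :
    ((rots w).map (fun x => x.rotate j)).Perm (rots w) := by
  induction j with
  | zero => simp [List.rotate_zero]
  | succ j ih =>
    have h1 : (rots w).map (fun x => x.rotate (j + 1))
        = ((rots w).map (fun x => x.rotate j)).map (fun x => x.rotate 1) := by
      rw [List.map_map]
      exact (List.map_congr_left fun x _ => by rw [Function.comp_apply, List.rotate_rotate]).symm
    rw [h1]
    exact (ih.map _).trans (rots_rotate_one w)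

lemma rots_rotate (w : List A) (i : ℕ) : ((rots (w.rotate i)) : Multiset (List A)) = (rots w : Multiset (List A)) := by
  rw [Multiset.coe_eq_coe]
  have e0 : rots (w.rotate i) = (rots w).map (fun x => x.rotate i) := by
    rw [rots, rots, List.length_rotate, List.map_map]
    exact List.map_congr_left fun j _ => by
      rw [Function.comp_apply, List.rotate_rotate, List.rotate_rotate, Nat.add_comm]
  rw [e0]
  exact rots_rotate_perm w i

variable [LinearOrder A]

def sr (w : List A) : List (List A) := Multiset.sort (rots w : Multiset (List A)) (· ≤ ·)

lemma bwt_eq (w : List A) : bwt w = (sr w).filterMap List.getLast? := rfl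

lemma sr_perm (w : List A) : (sr w).Perm (rots w) :=
  Multiset.coe_eq_coe.mp (Multiset.sort_eq _ _)

lemma sr_sorted (w : List A) : (sr w).Pairwise (· ≤ ·) := Multiset.pairwise_sort _ _

lemma length_of_mem_sr {w x : List A} (h : x ∈ sr w) : x.length = w.length :=
  length_of_mem_rots ((sr_perm w).mem_iff.mp h)

lemma length_sr (w : List A) : (sr w).length = w.length := by
  rw [(sr_perm w).length_eq, length_rots]

lemma bwt_rotate (w : List A) (i : ℕ) : bwt (w.rotate i) = bwt w := by
  rw [bwt_eq, bwt_eq]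
  unfold sr
  rw [rots_rotate]

end Rots


section Inv
variable {A : Type*}

lemma getLast?_eq_getLastD {x : List A} (hx : x ≠ []) (a₀ : A) :
    x.getLast? = some (x.getLastD a₀) := by
  rcases List.eq_nil_or_concat x with rfl | ⟨L, b, rfl⟩
  · exact absurd rfl hx
  · rw [List.concat_eq_append, List.getLast?_concat, List.getLastD_concat]

lemma filterMap_getLast?_eq_map (a₀ : A) :
    ∀ {l : List (List A)}, (∀ x ∈ l, x ≠ []) →
      l.filterMap List.getLast? = l.map (fun x => x.getLastD a₀)
  | [], _ => rfl
  | x :: l, h => by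
    rw [List.filterMap_cons_some (getLast?_eq_getLastD (h x (by simp)) a₀), List.map_cons,
      filterMap_getLast?_eq_map a₀ (fun y hy => h y (by simp [hy]))]

variable [LinearOrder A]

lemma bwt_eq_map (w : List A) (hw : w ≠ []) (a₀ : A) :
    bwt w = (sr w).map (fun x => x.getLastD a₀) := by
  rw [bwt_eq]
  apply filterMap_getLast?_eq_map
  intro x hx
  have h1 := length_of_mem_sr hx
  intro hnil
  rw [hnil] at h1
  exact hw (List.length_eq_zero_iff.mp h1.symm)

lemma length_bwt (w : List A) : (bwt w).length = w.length := by
  rcases eq_or_ne w [] with rfl | hw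
  · simp [bwt]
  · rw [bwt_eq_map w hw (w.getLast hw), List.length_map, length_sr]

lemma rotate_pred_take {x : List A} {n k : ℕ} (hx : x.length = n + 1) (hk : k ≤ n) (a₀ : A) :
    (x.rotate n).take (k + 1) = x.getLastD a₀ :: x.take k := by
  rcases List.eq_nil_or_concat x with rfl | ⟨y, b, rfl⟩
  · simp at hx
  · rw [List.concat_eq_append] at hx ⊢
    have hy : y.length = n := by
      rw [List.length_append, List.length_singleton] at hx; omega
    have hrot : (y ++ [b]).rotate n = b :: y := by
      rw [List.rotate_eq_drop_append_take (by rw [List.length_append, List.length_singleton]; omega),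
        ← hy, List.drop_left, List.take_left, List.singleton_append]
    rw [hrot, List.getLastD_concat, List.take_succ_cons, List.take_append_of_le_length (hy ▸ hk)]

lemma zipWith_cons_map {f : List A → A} {g : List A → List A} :
    ∀ (l : List (List A)), List.zipWith List.cons (l.map f) (l.map g) = l.map (fun x => f x :: g x)
  | [] => rfl
  | a :: l => by simp [zipWith_cons_map l]

lemma sorted_map_take (w : List A) (k : ℕ) :
    ((sr w).map (List.take k)).Pairwise (· ≤ ·) := by
  rw [List.pairwise_map]
  exact (sr_sorted w).imp_of_mem fun {x y} hx hy hxy =>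
    take_le_take ((length_of_mem_sr hx).trans (length_of_mem_sr hy).symm) hxy k

lemma bwt_step (w : List A) (hw : w ≠ []) (a₀ : A) (k : ℕ) (hk : k + 1 ≤ w.length) :
    (sr w).map (List.take (k + 1)) =
      Multiset.sort
        ((List.zipWith List.cons (bwt w) ((sr w).map (List.take k)) : List (List A)) : Multiset (List A)) (· ≤ ·) := by
  obtain ⟨n, hn⟩ : ∃ n, w.length = n + 1 :=
    ⟨w.length - 1, by have := List.length_pos_iff.mpr hw; omega⟩
  have hmult : (((sr w).map (List.take (k + 1)) : List (List A)) : Multiset (List A))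
      = ((List.zipWith List.cons (bwt w) ((sr w).map (List.take k)) : List (List A)) : Multiset (List A)) := by
    rw [bwt_eq_map w hw a₀, zipWith_cons_map]
    show Multiset.map (List.take (k + 1)) (sr w : Multiset (List A))
      = Multiset.map (fun x => x.getLastD a₀ :: x.take k) (sr w : Multiset (List A))
    unfold sr
    rw [Multiset.sort_eq]
    calc Multiset.map (List.take (k + 1)) (rots w : Multiset (List A))
        = Multiset.map (List.take (k + 1))
            (Multiset.map (fun x => x.rotate n) (rots w : Multiset (List A))) := by
          rw [show Multiset.map (fun x => x.rotate n) ((rots w : List (List A)) : Multiset (List A))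
              = ((rots w : List (List A)) : Multiset (List A)) from by
            rw [Multiset.map_coe]; exact Multiset.coe_eq_coe.mpr (rots_rotate_perm w n)]
      _ = Multiset.map (fun x => (x.rotate n).take (k + 1)) (rots w : Multiset (List A)) := by
          rw [Multiset.map_map]; rfl
      _ = Multiset.map (fun x => x.getLastD a₀ :: x.take k) (rots w : Multiset (List A)) := by
          apply Multiset.map_congr rfl
          intro x hx
          have hxl : x.length = n + 1 := by
            rw [← hn]; exact length_of_mem_rots (by simpa using hx)
          exact rotate_pred_take hxl (by omega) a₀
  refine List.eq_of_perm_of_sorted ?_ (sorted_map_take w (k + 1)) (Multiset.pairwise_sort _ _)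
  have hs := Multiset.coe_eq_coe.mp
    (Multiset.sort_eq (α := List A)
      ((List.zipWith List.cons (bwt w) ((sr w).map (List.take k)) : List (List A)) : Multiset (List A)) (· ≤ ·))
  exact (Multiset.coe_eq_coe.mp hmult).trans hs.symm

lemma bwt_inj {w v : List A} (hl : w.length = v.length) (h : bwt w = bwt v) :
    ∃ i, w = v.rotate i := by
  rcases eq_or_ne w [] with rfl | hw
  · have hv : v = [] := List.length_eq_zero_iff.mp (by simpa using hl.symm)
    exact ⟨0, by simp [hv]⟩
  · have hv : v ≠ [] := fun h' => hw (List.length_eq_zero_iff.mp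
      (by rw [h', List.length_nil] at hl; exact hl))
    set a₀ := w.getLast hw with ha
    have key : ∀ k, k ≤ w.length → (sr w).map (List.take k) = (sr v).map (List.take k) := by
      intro k
      induction k with
      | zero =>
        intro _
        rw [show (List.take 0 : List A → List A) = Function.const _ [] from
            funext fun x => List.take_zero (l := x),
          List.map_const, List.map_const, length_sr, length_sr, hl]
      | succ k ih =>
        intro hk
        rw [bwt_step w hw a₀ k hk, bwt_step v hv a₀ k (hl ▸ hk), h, ih (by omega)]
    have hsr : sr w = sr v := by
      have hkey := key w.length le_rfl
      have e1 : (sr w).map (List.take w.length) = sr w := by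
        rw [List.map_congr_left (g := fun x => x)
          (fun x hx => List.take_of_length_le (le_of_eq (length_of_mem_sr hx)))]
        exact List.map_id' _
      have e2 : (sr v).map (List.take w.length) = sr v := by
        rw [List.map_congr_left (g := fun x => x)
          (fun x hx => List.take_of_length_le (le_of_eq ((length_of_mem_sr hx).trans hl.symm)))]
        exact List.map_id' _
      rw [e1, e2] at hkey
      exact hkey
    have hmem : w ∈ rots v := by
      have h1 : w ∈ sr w := (sr_perm w).mem_iff.mpr (self_mem_rots hw)
      rw [hsr] at h1
      exact (sr_perm v).mem_iff.mp h1
    simp only [rots, List.mem_map, List.mem_range] at hmem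
    obtain ⟨i, _, hi⟩ := hmem
    exact ⟨i, hi.symm⟩

end Inv


section Pow
variable {A : Type*}

lemma rotate_append_eq (s t : List A) : (s ++ t).rotate s.length = t ++ s := by
  rw [List.rotate_eq_drop_append_take (by simp), List.drop_left, List.take_left]

lemma wordPow_rotate_swap (s t : List A) (p : ℕ) :
    (wordPow (s ++ t) p).rotate s.length = wordPow (t ++ s) p := by
  cases p with
  | zero => simp [wordPow]
  | succ q =>
    have e0 : wordPow (s ++ t) (q + 1) = s ++ (t ++ wordPow (s ++ t) q) := by
      show (s ++ t) ++ wordPow (s ++ t) q = s ++ (t ++ wordPow (s ++ t) q)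
      rw [List.append_assoc]
    rw [e0, rotate_append_eq, wordPow_succ', ← List.append_assoc, wordPow_swap]

lemma wordPow_rotate_period (u : List A) (p : ℕ) :
    (wordPow u p).rotate u.length = wordPow u p := by
  cases p with
  | zero => simp [wordPow]
  | succ q =>
    show (u ++ wordPow u q).rotate u.length = wordPow u (q + 1)
    rw [rotate_append_eq, ← wordPow_succ']

lemma wordPow_rotate_mod (u : List A) (p i : ℕ) (hu : u ≠ []) :
    (wordPow u p).rotate i = (wordPow u p).rotate (i % u.length) := by
  conv_lhs => rw [show i = u.length * (i / u.length) + i % u.length from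
    (Nat.div_add_mod i u.length).symm]
  generalize i / u.length = q
  induction q with
  | zero => rw [Nat.mul_zero, Nat.zero_add]
  | succ q ih =>
    rw [show u.length * (q + 1) + i % u.length
        = u.length + (u.length * q + i % u.length) by ring,
      ← List.rotate_rotate, wordPow_rotate_period, ih]

lemma wordPow_rotate (u : List A) (p i : ℕ) (hu : u ≠ []) :
    (wordPow u p).rotate i = wordPow (u.rotate (i % u.length)) p := by
  rw [wordPow_rotate_mod u p i hu]
  have hr : i % u.length < u.length := Nat.mod_lt _ (List.length_pos_iff.mpr hu)
  set r := i % u.length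
  have hs : (u.take r).length = r := by
    rw [List.length_take]; omega
  have hrot : u.rotate r = u.drop r ++ u.take r :=
    List.rotate_eq_drop_append_take (le_of_lt hr)
  have key := wordPow_rotate_swap (u.take r) (u.drop r) p
  rw [List.take_append_drop, hs] at key
  rw [hrot]
  exact key

lemma flatten_map_append_perm {β γ : Type*} (g h : β → List γ) (l : List β) :
    ((l.map (fun x => g x ++ h x)).flatten).Perm ((l.map g).flatten ++ (l.map h).flatten) := by
  induction l with
  | nil => simp
  | cons a l ih =>
    simp only [List.map_cons, List.flatten_cons, List.append_assoc]
    refine List.Perm.append_left (g a) ?_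
    refine (List.Perm.append_left (h a) ih).trans ?_
    simp only [← List.append_assoc]
    exact List.Perm.append_right _ List.perm_append_comm

lemma flatten_map_singleton {β γ : Type*} (f : β → γ) (l : List β) :
    (l.map (fun x => [f x])).flatten = l.map f := by
  induction l with
  | nil => rfl
  | cons a l ih => simp [ih]

lemma permpow {β : Type*} (f : ℕ → β) (m : ℕ) :
    ∀ p, ((List.range (p * m)).map (fun i => f (i % m))).Perm
      (((List.range m).map (fun r => List.replicate p (f r))).flatten)
  | 0 => by simp [List.flatten_eq_nil_iff]
  | p + 1 => by
    rw [Nat.succ_mul, List.range_add, List.map_append, List.map_map]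
    have e1 : (List.range m).map ((fun i => f (i % m)) ∘ (fun x => p * m + x))
        = (List.range m).map f := by
      apply List.map_congr_left
      intro r hr
      rw [List.mem_range] at hr
      show f ((p * m + r) % m) = f r
      rw [show p * m + r = m * p + r by ring, Nat.mul_add_mod, Nat.mod_eq_of_lt hr]
    rw [e1]
    have e2 : (List.range m).map (fun r => List.replicate (p + 1) (f r))
        = (List.range m).map (fun r => List.replicate p (f r) ++ [f r]) := by
      apply List.map_congr_left; intro r _; rw [List.replicate_succ']
    rw [e2]
    refine ((permpow f m p).append_right _).trans ?_
    have h2 := flatten_map_append_perm (fun r => List.replicate p (f r)) (fun r => [f r])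
      (List.range m)
    rw [flatten_map_singleton] at h2
    exact h2.symm

end Pow


section BwtPow
variable {A : Type*}

lemma wordPow_nil (p : ℕ) : wordPow ([] : List A) p = [] := by
  induction p with
  | zero => rfl
  | succ n ih => show [] ++ wordPow ([] : List A) n = []; simp [ih]

lemma filterMap_replicate {γ δ : Type*} {f : γ → Option δ} {a : γ} {b : δ}
    (h : f a = some b) : ∀ p, (List.replicate p a).filterMap f = List.replicate p b
  | 0 => rfl
  | p + 1 => by
    rw [List.replicate_succ, List.replicate_succ, List.filterMap_cons_some h,
      filterMap_replicate h p]

lemma getLast?_wordPow (x : List A) (hx : x ≠ []) (p : ℕ) (hp : 1 ≤ p) (a₀ : A) :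
    (wordPow x p).getLast? = some (x.getLastD a₀) := by
  obtain ⟨q, rfl⟩ : ∃ q, p = q + 1 := ⟨p - 1, by omega⟩
  rw [wordPow_succ', List.getLast?_append, getLast?_eq_getLastD hx a₀]
  rfl

variable [LinearOrder A]

lemma bwt_nil : bwt ([] : List A) = [] := by
  simp [bwt]

lemma bwt_wordPow (u : List A) (p : ℕ) (hp : 1 ≤ p) :
    bwt (wordPow u p) = ((bwt u).map (fun b => List.replicate p b)).flatten := by
  rcases eq_or_ne u [] with rfl | hu
  · rw [wordPow_nil, bwt_nil]; rfl
  have hm0 : 0 < u.length := List.length_pos_iff.mpr hu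
  set a₀ := u.getLast hu with ha
  have hsr : sr (wordPow u p)
      = ((sr u).map (fun x => List.replicate p (wordPow x p))).flatten := by
    apply List.eq_of_perm_of_sorted ?_ (sr_sorted _) ?_
    · refine (sr_perm _).trans ?_
      have e0 : rots (wordPow u p)
          = (List.range (p * u.length)).map (fun i => wordPow (u.rotate (i % u.length)) p) := by
        rw [rots, wordPow_length]
        exact List.map_congr_left fun i _ => wordPow_rotate u p i hu
      rw [e0]
      refine (permpow (fun r => wordPow (u.rotate r) p) u.length p).trans ?_
      have e1 : (List.range u.length).map (fun r => List.replicate p (wordPow (u.rotate r) p))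
          = (rots u).map (fun x => List.replicate p (wordPow x p)) := by
        rw [rots, List.map_map]; rfl
      rw [e1]
      exact ((sr_perm u).symm.map _).flatten
    · rw [List.pairwise_flatten]
      constructor
      · intro c hc
        rw [List.mem_map] at hc
        obtain ⟨x, _, rfl⟩ := hc
        exact List.pairwise_replicate.mpr (Or.inr le_rfl)
      · rw [List.pairwise_map]
        refine (sr_sorted u).imp_of_mem ?_
        intro x y hx hy hxy a ha b hb
        rw [List.eq_of_mem_replicate ha, List.eq_of_mem_replicate hb]
        exact wordPow_le_wordPow ((length_of_mem_sr hx).trans (length_of_mem_sr hy).symm) hxy p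
  rw [bwt_eq, hsr, List.filterMap_flatten, List.map_map, bwt_eq_map u hu a₀, List.map_map]
  congr 1
  apply List.map_congr_left
  intro x hx
  have hxne : x ≠ [] := by
    intro h'
    have := length_of_mem_sr hx
    rw [h', List.length_nil] at this
    omega
  show (List.replicate p (wordPow x p)).filterMap List.getLast? = List.replicate p (x.getLastD a₀)
  exact filterMap_replicate (getLast?_wordPow x hxne p hp a₀) p

end BwtPow

/-- A word `w` is a conjugate of `u^p` if and only if `bwt w` is obtained from
`bwt u = b₁ ⋯ b_m` by replacing each letter `bᵢ` by `bᵢ^p`. -/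
theorem conjugate_pow_iff_bwt {A : Type*} [LinearOrder A] (u w : List A) (p : ℕ)
    (hp : 1 ≤ p) :
    (∃ s t : List A, wordPow u p = s ++ t ∧ w = t ++ s) ↔
      bwt w = ((bwt u).map (fun b => List.replicate p b)).flatten := by
  constructor
  · rintro ⟨s, t, h1, rfl⟩
    have h2 : t ++ s = (wordPow u p).rotate s.length := by
      rw [h1, rotate_append_eq]
    rw [h2, bwt_rotate, bwt_wordPow u p hp]
  · intro h
    rw [← bwt_wordPow u p hp] at h
    have hl : w.length = (wordPow u p).length := by
      rw [← length_bwt, ← length_bwt (wordPow u p), h]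
    obtain ⟨i, hi⟩ := bwt_inj hl h
    rcases eq_or_ne (wordPow u p) [] with hnil | hne
    · refine ⟨[], [], by simp [hnil], ?_⟩
      rw [hi, hnil, List.rotate_nil]
      rfl
    · have hN : 0 < (wordPow u p).length := List.length_pos_iff.mpr hne
      refine ⟨(wordPow u p).take (i % (wordPow u p).length),
        (wordPow u p).drop (i % (wordPow u p).length), (List.take_append_drop _ _).symm, ?_⟩
      rw [hi, ← List.rotate_mod,
        List.rotate_eq_drop_append_take (le_of_lt (Nat.mod_lt _ hN))]
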